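/- For all positive reals a, b: S(a,b) − H(a,b) ≤ (9/4)(C(a,b) − R(a,b)). -/

import Mathlib

noncomputable def meanA (a b : ℝ) : ℝ := (a + b) / 2
noncomputable def meanG (a b : ℝ) : ℝ := Real.sqrt (a * b)
noncomputable def meanH (a b : ℝ) : ℝ := 2 * a * b / (a + b)
noncomputable def meanN (a b : ℝ) : ℝ := (a + Real.sqrt (a * b) + b) / 3
noncomputable def meanC (a b : ℝ) : ℝ := (a ^ 2 + b ^ 2) / (a + b)
noncomputable def meanS (a b : ℝ) : ℝ := Real.sqrt ((a ^ 2 + b ^ 2) / 2)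
noncomputable def meanR (a b : ℝ) : ℝ := 2 * (a ^ 2 + a * b + b ^ 2) / (3 * (a + b))
noncomputable def triDelta (a b : ℝ) : ℝ := (a - b) ^ 2 / (a + b)
noncomputable def hellinger (a b : ℝ) : ℝ := (Real.sqrt a - Real.sqrt b) ^ 2 / 2

theorem stmt_8 (a b : ℝ) (ha : 0 < a) (hb : 0 < b) :
    meanS a b - meanH a b ≤ (9 / 4) * (meanC a b - meanR a b) := by
  have hab : 0 < a + b := by linarith
  have key : Real.sqrt ((a ^ 2 + b ^ 2) / 2)
      ≤ (3 * a ^ 2 + 2 * a * b + 3 * b ^ 2) / (4 * (a + b)) := by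
    have h1 : (a ^ 2 + b ^ 2) / 2
        ≤ ((3 * a ^ 2 + 2 * a * b + 3 * b ^ 2) / (4 * (a + b))) ^ 2 := by
      rw [div_pow, le_div_iff₀ (by positivity)]
      nlinarith [pow_le_pow_left₀ (le_of_lt (by positivity : (0:ℝ) < 1)) (le_refl (1:ℝ)) 1, sq_nonneg ((a - b) ^ 2), sq_nonneg (a - b), mul_pos ha hb]
    calc Real.sqrt ((a ^ 2 + b ^ 2) / 2)
        ≤ Real.sqrt (((3 * a ^ 2 + 2 * a * b + 3 * b ^ 2) / (4 * (a + b))) ^ 2) :=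
          Real.sqrt_le_sqrt h1
      _ = (3 * a ^ 2 + 2 * a * b + 3 * b ^ 2) / (4 * (a + b)) :=
          Real.sqrt_sq (by positivity)
  unfold meanS meanH meanC meanR
  have h2 : (9 / 4 : ℝ) * ((a ^ 2 + b ^ 2) / (a + b)
      - 2 * (a ^ 2 + a * b + b ^ 2) / (3 * (a + b)))
      = (3 * a ^ 2 + 2 * a * b + 3 * b ^ 2) / (4 * (a + b)) - 2 * a * b / (a + b) := by
    field_simp
    ring
  linarith [key]
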